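/- Suppose P(x) = ((⋯(x^2 - c_1)^2 ⋯)^2 - c_k ∈ ℤ[x] splits into linear factors over ℤ and c_k ≠ 0. Then c_j > 0 for every j with 1 ≤ j ≤ k, and moreover c_j ≥ c_k^(1/2^(k-j)), i.e. c_j^(2^(k-j)) ≥ c_k. -/
import Mathlib


open Polynomial

noncomputable def chain (c : ℕ → ℤ) : ℕ → Polynomial ℤ
  | 0 => X
  | j + 1 => (chain c j) ^ 2 - C (c (j + 1))

def Crumbles (P : Polynomial ℤ) : Prop :=
  ∃ s : Multiset (Polynomial ℤ), (∀ q ∈ s, q.degree = 1) ∧ P = s.prod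

lemma chain_monic_natDegree (c : ℕ → ℤ) :
    ∀ j, (chain c j).Monic ∧ (chain c j).natDegree = 2 ^ j := by
  intro j
  induction j with
  | zero => exact ⟨monic_X, by simp [chain]⟩
  | succ n ih =>
    obtain ⟨hm, hd⟩ := ih
    have hsq : ((chain c n) ^ 2).Monic := hm.pow 2
    have hdsq : ((chain c n) ^ 2).natDegree = 2 ^ (n + 1) := by
      rw [natDegree_pow, hd]; ring
    have hpos : 0 < ((chain c n) ^ 2).natDegree := by rw [hdsq]; positivity
    constructor
    · rw [chain, sub_eq_add_neg, ← C_neg]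
      exact hsq.add_of_left (lt_of_le_of_lt degree_C_le
        (natDegree_pos_iff_degree_pos.mp hpos))
    · rw [chain, sub_eq_add_neg, ← C_neg, natDegree_add_C, hdsq]

lemma chain_congr (c c' : ℕ → ℤ) :
    ∀ j, (∀ i, 1 ≤ i → i ≤ j → c i = c' i) → chain c j = chain c' j := by
  intro j
  induction j with
  | zero => intro _; rfl
  | succ n ih =>
    intro h
    rw [chain, chain, ih (fun i h1 h2 => h i h1 (Nat.le_succ_of_le h2)),
      h (n + 1) (by omega) le_rfl]

lemma crumbles_aux (s : Multiset (Polynomial ℤ)) (hdeg : ∀ q ∈ s, q.degree = 1)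
    (hu : ∀ q ∈ s, IsUnit q.leadingCoeff) :
    ∃ m : Multiset ℤ,
      s.prod = C ((s.map leadingCoeff).prod) * (m.map (fun r => X - C r)).prod := by
  induction s using Multiset.induction with
  | empty => exact ⟨0, by simp⟩
  | cons a t ih =>
    obtain ⟨m, hm⟩ := ih (fun q hq => hdeg q (Multiset.mem_cons_of_mem hq))
      (fun q hq => hu q (Multiset.mem_cons_of_mem hq))
    have hda := hdeg a (Multiset.mem_cons_self a t)
    have hua := hu a (Multiset.mem_cons_self a t)
    have h1 : a = C (a.coeff 1) * X + C (a.coeff 0) :=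
      eq_X_add_C_of_degree_le_one (le_of_eq hda)
    have hlc : a.leadingCoeff = a.coeff 1 := by
      rw [leadingCoeff, natDegree_eq_of_degree_eq_some hda]
      exact rfl
    have huu : a.coeff 1 * a.coeff 1 = 1 := by
      rcases Int.isUnit_iff.mp (hlc ▸ hua) with h | h <;> rw [h] <;> ring
    have ha : a = C (a.coeff 1) * (X - C (-(a.coeff 1 * a.coeff 0))) := by
      rw [mul_sub, ← C_mul, mul_neg, ← mul_assoc, huu, one_mul, C_neg, sub_neg_eq_add]
      exact h1
    refine ⟨(-(a.coeff 1 * a.coeff 0)) ::ₘ m, ?_⟩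
    rw [Multiset.prod_cons, hm, Multiset.map_cons, Multiset.prod_cons,
      Multiset.map_cons, Multiset.prod_cons, C_mul, hlc]
    conv_lhs => rw [ha]
    ring

lemma crumbles_monic_prod {P : Polynomial ℤ} (hmon : P.Monic) (hcr : Crumbles P) :
    ∃ m : Multiset ℤ, P = (m.map (fun r => X - C r)).prod := by
  obtain ⟨s, hdeg, hP⟩ := hcr
  have hu : ∀ q ∈ s, IsUnit q.leadingCoeff := by
    intro q hq
    apply isUnit_of_dvd_one
    have h : q.leadingCoeff ∣ (s.map leadingCoeff).prod :=
      Multiset.dvd_prod (Multiset.mem_map_of_mem _ hq)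
    rwa [← leadingCoeff_multiset_prod, ← hP, hmon.leadingCoeff] at h
  obtain ⟨m, hm⟩ := crumbles_aux s hdeg hu
  have h1 : (s.map leadingCoeff).prod = 1 := by
    rw [← leadingCoeff_multiset_prod, ← hP]; exact hmon.leadingCoeff
  exact ⟨m, by rw [hP, hm, h1, C_1, one_mul]⟩

lemma crumbles_of_dvd_prod :
    ∀ (m : Multiset ℤ) (q : Polynomial ℤ), q.Monic →
      q ∣ (m.map (fun r => X - C r)).prod → Crumbles q := by
  intro m
  induction m using Multiset.induction with
  | empty =>
    intro q hq hdvd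
    simp only [Multiset.map_zero, Multiset.prod_zero] at hdvd
    rw [hq.eq_one_of_isUnit (isUnit_of_dvd_one hdvd)]
    exact ⟨0, by simp, by simp⟩
  | cons r t ih =>
    intro q hq hdvd
    rw [Multiset.map_cons, Multiset.prod_cons] at hdvd
    obtain ⟨d, hd⟩ := hdvd
    have hp : Prime (X - C r) := prime_X_sub_C r
    have hpd : (X - C r) ∣ q * d := ⟨(t.map (fun r => X - C r)).prod, by rw [← hd]⟩
    rcases hp.2.2 q d hpd with h | h
    · obtain ⟨q', rfl⟩ := h
      have hq' : q'.Monic := (monic_X_sub_C r).of_mul_monic_left hq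
      have hdvd' : q' ∣ (t.map (fun r => X - C r)).prod := by
        exact (mul_dvd_mul_iff_left (X_sub_C_ne_zero r)).mp ⟨d, hd⟩
      obtain ⟨s', hs1, hs2⟩ := ih q' hq' hdvd'
      refine ⟨(X - C r) ::ₘ s', ?_, ?_⟩
      · intro p hp'
        rcases Multiset.mem_cons.mp hp' with h | h
        · rw [h]; exact degree_X_sub_C r
        · exact hs1 p h
      · rw [Multiset.prod_cons, ← hs2]
    · obtain ⟨d', rfl⟩ := h
      have heq : (X - C r) * (t.map (fun r => X - C r)).prod = (X - C r) * (q * d') := by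
        rw [hd]; ring
      exact ih q hq ⟨d', mul_left_cancel₀ (X_sub_C_ne_zero r) heq⟩

lemma crumbles_of_dvd {P q : Polynomial ℤ} (hmon : P.Monic) (hcr : Crumbles P)
    (hdvd : q ∣ P) (hq : q.Monic) : Crumbles q := by
  obtain ⟨m, hm⟩ := crumbles_monic_prod hmon hcr
  exact crumbles_of_dvd_prod m q hq (hm ▸ hdvd)

lemma crumbles_exists_root {P : Polynomial ℤ} (hmon : P.Monic) (hcr : Crumbles P)
    (hdeg : P.natDegree ≠ 0) : ∃ x : ℤ, P.eval x = 0 := by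
  obtain ⟨m, hm⟩ := crumbles_monic_prod hmon hcr
  rcases eq_or_ne m 0 with rfl | hne
  · simp only [Multiset.map_zero, Multiset.prod_zero] at hm
    rw [hm] at hdeg; simp at hdeg
  · obtain ⟨r, hr⟩ := Multiset.exists_mem_of_ne_zero hne
    have hdvd : (X - C r) ∣ P := hm ▸ Multiset.dvd_prod (Multiset.mem_map_of_mem _ hr)
    exact ⟨r, eval_eq_zero_of_dvd_of_eval_eq_zero hdvd (by simp)⟩

theorem stmt_5 (k : ℕ) (c : ℕ → ℤ) (hcr : Crumbles (chain c k)) (hck : c k ≠ 0) :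
    ∀ j, 1 ≤ j → j ≤ k → 0 < c j ∧ c k ≤ c j ^ 2 ^ (k - j) := by
  induction k generalizing c with
  | zero => intro j h1 h2; omega
  | succ k ih =>
    intro j hj1 hjk
    obtain ⟨hmon, hdeg⟩ := chain_monic_natDegree c (k + 1)
    obtain ⟨x, hx⟩ := crumbles_exists_root hmon hcr (by rw [hdeg]; positivity)
    have hx' : (eval x (chain c k)) ^ 2 = c (k + 1) := by
      have h : eval x (chain c (k + 1)) = (eval x (chain c k)) ^ 2 - c (k + 1) := by
        simp [chain]
      rw [hx] at h
      linarith
    set M : ℤ := |eval x (chain c k)| with hM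
    have hM2 : M ^ 2 = c (k + 1) := by rw [hM, sq_abs]; exact hx'
    have hMnn : 0 ≤ M := hM ▸ abs_nonneg _
    have hM0 : M ≠ 0 := by
      intro h0
      exact hck (by rw [← hM2, h0]; ring)
    have hM1 : 1 ≤ M := by omega
    rcases Nat.lt_or_ge j (k + 1) with hjlt | hjge
    · -- j ≤ k, so k ≥ 1
      have hjk' : j ≤ k := by omega
      have hk1 : 1 ≤ k := le_trans hj1 hjk'
      obtain ⟨k', rfl⟩ : ∃ k', k = k' + 1 := ⟨k - 1, by omega⟩
      set c' : ℕ → ℤ := fun i => if i = k' + 1 then c (k' + 1) + M else c i with hc'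
      set c'' : ℕ → ℤ := fun i => if i = k' + 1 then c (k' + 1) - M else c i with hc''
      have hcc' : chain c (k' + 1) - C M = chain c' (k' + 1) := by
        rw [chain, chain, chain_congr c c' k' (fun i h1 h2 => by
          simp only [hc']; rw [if_neg (by omega : ¬ i = k' + 1)]),
          (by simp [hc'] : c' (k' + 1) = c (k' + 1) + M), C_add]
        ring
      have hcc'' : chain c (k' + 1) + C M = chain c'' (k' + 1) := by
        rw [chain, chain, chain_congr c c'' k' (fun i h1 h2 => by
          simp only [hc'']; rw [if_neg (by omega : ¬ i = k' + 1)]),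
          (by simp [hc''] : c'' (k' + 1) = c (k' + 1) - M), C_sub]
        ring
      have hfact : chain c (k' + 1 + 1) = chain c' (k' + 1) * chain c'' (k' + 1) := by
        rw [← hcc', ← hcc'', chain, ← hM2,
          (by rw [sq, C_mul] : (C (M ^ 2) : Polynomial ℤ) = C M * C M)]
        ring
      obtain ⟨hmon', hdeg'⟩ := chain_monic_natDegree c' (k' + 1)
      obtain ⟨hmon'', hdeg''⟩ := chain_monic_natDegree c'' (k' + 1)
      have hcr' : Crumbles (chain c' (k' + 1)) :=
        crumbles_of_dvd hmon hcr ⟨chain c'' (k' + 1), hfact⟩ hmon'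
      have hcr'' : Crumbles (chain c'' (k' + 1)) :=
        crumbles_of_dvd hmon hcr ⟨chain c' (k' + 1), by rw [hfact]; ring⟩ hmon''
      obtain ⟨y, hy⟩ := crumbles_exists_root hmon'' hcr'' (by rw [hdeg'']; positivity)
      have hckM : M ≤ c (k' + 1) := by
        have h1 : eval y (chain c'' (k' + 1)) =
            (eval y (chain c'' k')) ^ 2 - c'' (k' + 1) := by
          simp [chain]
        have h2 : c'' (k' + 1) = c (k' + 1) - M := by simp [hc'']
        rw [hy, h2] at h1
        nlinarith [sq_nonneg (eval y (chain c'' k'))]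
      have hc'k : c' (k' + 1) = c (k' + 1) + M := by simp [hc']
      have hIH := ih c' hcr' (by rw [hc'k]; omega)
      rcases Nat.lt_or_ge j (k' + 1) with hjlt' | hjge'
      · obtain ⟨hpos, hbound⟩ := hIH j hj1 (by omega)
        have hcj : c' j = c j := by
          simp only [hc']; rw [if_neg (by omega : ¬ j = k' + 1)]
        rw [hcj] at hpos hbound
        rw [hc'k] at hbound
        refine ⟨hpos, ?_⟩
        have hexp : k' + 1 + 1 - j = (k' + 1 - j) + 1 := by omega
        rw [hexp, pow_succ, pow_mul, ← hM2]
        nlinarith [pow_nonneg hpos.le (2 ^ (k' + 1 - j))]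
      · have hj : j = k' + 1 := by omega
        subst hj
        refine ⟨by omega, ?_⟩
        have hexp : k' + 1 + 1 - (k' + 1) = 1 := by omega
        rw [hexp, pow_one, ← hM2]
        nlinarith
    · have hj : j = k + 1 := by omega
      subst hj
      constructor
      · rw [← hM2]; positivity
      · simp
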